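/- Let S be a finite nonempty set, p : S → S → ℝ a stochastic matrix (p(i,j) ≥ 0 for all i,j and Σ_j p(i,j) = 1 for all i) with all entries strictly positive, g : S → ℝ, and ζ ∈ ℝ. Then there exist ρ > 0 and V : S → ℝ with V(i) > 0 for all i such that V(i) = (exp(ζ·g(i))/ρ) · Σ_j p(i,j)·V(j) for every i ∈ S. -/

import Mathlib

open Finset

theorem multiplicative_poisson_exists
    {S : Type*} [Fintype S] [Nonempty S]
    (p : S → S → ℝ)
    (hp_pos : ∀ i j, 0 < p i j)
    (hp_row : ∀ i, ∑ j, p i j = 1)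
    (g : S → ℝ) (ζ : ℝ) :
    ∃ (ρ : ℝ) (V : S → ℝ), 0 < ρ ∧ (∀ i, 0 < V i) ∧
      ∀ i, V i = (Real.exp (ζ * g i) / ρ) * ∑ j, p i j * V j := by
  classical
  set Q : S → S → ℝ := fun i j => Real.exp (ζ * g i) * p i j with hQdef
  have hQ : ∀ i j, 0 < Q i j := fun i j => mul_pos (Real.exp_pos _) (hp_pos i j)
  obtain ⟨⟨i₁, j₁⟩, -, hm⟩ := Finset.exists_min_image (univ : Finset (S × S))
    (fun q => Q q.1 q.2) univ_nonempty
  obtain ⟨⟨i₂, j₂⟩, -, hA⟩ := Finset.exists_max_image (univ : Finset (S × S))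
    (fun q => Q q.1 q.2) univ_nonempty
  set m : ℝ := Q i₁ j₁ with hmdef
  set A : ℝ := Q i₂ j₂ with hAdef
  have hm_pos : 0 < m := hQ _ _
  have hA_pos : 0 < A := hQ _ _
  have hm_le : ∀ i j, m ≤ Q i j := fun i j => hm ⟨i, j⟩ (mem_univ _)
  have hA_ge : ∀ i j, Q i j ≤ A := fun i j => hA ⟨i, j⟩ (mem_univ _)
  have hmA : m ≤ A := hm_le i₂ j₂
  set n : ℝ := (Fintype.card S : ℝ) with hndef
  have hn_pos : 0 < n := by
    simp only [hndef, Nat.cast_pos, Fintype.card_pos]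
  set c : ℝ := m / (n * A) with hcdef
  have hc_pos : 0 < c := div_pos hm_pos (mul_pos hn_pos hA_pos)
  have hc_le : c ≤ 1 / n := by
    rw [hcdef, div_le_div_iff₀ (mul_pos hn_pos hA_pos) hn_pos]
    calc m * n ≤ A * n := by nlinarith
    _ = 1 * (n * A) := by ring
  set K : Set (S → ℝ) := {V | (∀ i, c ≤ V i) ∧ ∑ i, V i = 1} with hKdef
  have hKne : K.Nonempty := by
    refine ⟨fun _ => 1 / n, fun i => hc_le, ?_⟩
    rw [Finset.sum_const, nsmul_eq_mul]
    field_simp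
    simp [hndef]
  have hKclosed : IsClosed K := by
    have h1 : IsClosed {V : S → ℝ | ∀ i, c ≤ V i} := by
      have : {V : S → ℝ | ∀ i, c ≤ V i} = ⋂ i, {V | c ≤ V i} := by
        ext V; simp
      rw [this]
      exact isClosed_iInter fun i => isClosed_le continuous_const (continuous_apply i)
    have h2 : IsClosed {V : S → ℝ | ∑ i, V i = 1} :=
      isClosed_eq (continuous_finset_sum _ fun i _ => continuous_apply i) continuous_const
    exact h1.inter h2
  have hKcompact : IsCompact K := by
    refine IsCompact.of_isClosed_subset (isCompact_univ_pi fun _ => isCompact_Icc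
      (a := c) (b := 1)) hKclosed ?_
    rintro V ⟨h1, h2⟩ i -
    refine ⟨h1 i, ?_⟩
    rw [← Finset.sum_erase_add univ V (mem_univ i)] at h2
    have hnn : 0 ≤ ∑ j ∈ univ.erase i, V j :=
      Finset.sum_nonneg fun j _ => le_trans hc_pos.le (h1 j)
    linarith
  set T : (S → ℝ) → S → ℝ := fun V i => ∑ j, Q i j * V j with hTdef
  have hT_cont : ∀ i, Continuous (fun V => T V i) := fun i =>
    continuous_finset_sum _ fun j _ => continuous_const.mul (continuous_apply j)
  set r : (S → ℝ) → ℝ :=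
    fun V => univ.inf' univ_nonempty (fun i => T V i / V i) with hrdef
  have hr_cont : ContinuousOn r K := by
    refine ContinuousOn.finset_inf'_apply univ_nonempty fun i _ => ?_
    refine ContinuousOn.div (hT_cont i).continuousOn (continuous_apply i).continuousOn ?_
    intro V hV
    exact ne_of_gt (lt_of_lt_of_le hc_pos (hV.1 i))
  obtain ⟨V, hVK, hVmax⟩ := hKcompact.exists_isMaxOn hKne hr_cont
  have hVpos : ∀ i, 0 < V i := fun i => lt_of_lt_of_le hc_pos (hVK.1 i)
  set ρ : ℝ := r V with hρdef
  have hT_lb : ∀ W ∈ K, ∀ i, m ≤ T W i := by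
    intro W hW i
    calc m = m * ∑ j, W j := by rw [hW.2, mul_one]
    _ = ∑ j, m * W j := by rw [Finset.mul_sum]
    _ ≤ ∑ j, Q i j * W j := Finset.sum_le_sum fun j _ =>
        mul_le_mul_of_nonneg_right (hm_le i j) (le_trans hc_pos.le (hW.1 j))
  have hρ_pos : 0 < ρ := by
    rw [hρdef, hrdef]
    rw [Finset.lt_inf'_iff]
    intro i _
    exact div_pos (lt_of_lt_of_le hm_pos (hT_lb V hVK i)) (hVpos i)
  have hle : ∀ i, ρ * V i ≤ T V i := by
    intro i
    have h : ρ ≤ T V i / V i := Finset.inf'_le (fun i => T V i / V i) (mem_univ i)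
    exact (le_div_iff₀ (hVpos i)).mp h
  have heq : ∀ i, T V i = ρ * V i := by
    by_contra hne
    push_neg at hne
    obtain ⟨i₀, hi₀⟩ := hne
    have hi₀' : ρ * V i₀ < T V i₀ := lt_of_le_of_ne (hle i₀) (Ne.symm hi₀)
    set s : ℝ := ∑ i, T V i with hsdef
    have hs_pos : 0 < s := Finset.sum_pos (fun i _ =>
      lt_of_lt_of_le hm_pos (hT_lb V hVK i)) univ_nonempty
    set W : S → ℝ := fun i => T V i / s with hWdef
    have hub : ∀ i, T V i ≤ A := by
      intro i
      calc T V i ≤ ∑ j, A * V j := Finset.sum_le_sum fun j _ =>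
          mul_le_mul_of_nonneg_right (hA_ge i j) (le_trans hc_pos.le (hVK.1 j))
      _ = A := by rw [← Finset.mul_sum, hVK.2, mul_one]
    have hsub : s ≤ n * A := by
      calc s ≤ ∑ _i : S, A := Finset.sum_le_sum fun i _ => hub i
      _ = n * A := by rw [Finset.sum_const, nsmul_eq_mul, Finset.card_univ]
    have hWK : W ∈ K := by
      constructor
      · intro i
        show c ≤ T V i / s
        rw [hcdef]
        exact div_le_div₀ (le_trans hm_pos.le (hT_lb V hVK i)) (hT_lb V hVK i) hs_pos hsub
      · show (∑ i, T V i / s) = 1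
        rw [← Finset.sum_div, ← hsdef, div_self (ne_of_gt hs_pos)]
    have hWpos : ∀ i, 0 < W i := fun i => lt_of_lt_of_le hc_pos (hWK.1 i)
    have hWr : ρ < r W := by
      rw [hrdef, Finset.lt_inf'_iff]
      intro i _
      rw [lt_div_iff₀ (hWpos i)]
      have key : ρ * T V i < ∑ j, Q i j * T V j := by
        calc ρ * T V i = ∑ j, Q i j * (ρ * V j) := by
              rw [hTdef]; simp only; rw [Finset.mul_sum]; congr 1; ext j; ring
        _ < ∑ j, Q i j * T V j := by
              refine Finset.sum_lt_sum (fun j _ =>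
                mul_le_mul_of_nonneg_left (hle j) (hQ i j).le)
                ⟨i₀, mem_univ _, mul_lt_mul_of_pos_left hi₀' (hQ i i₀)⟩
      have hTW : T W i = (∑ j, Q i j * T V j) / s := by
        show (∑ j, Q i j * (T V j / s)) = _
        simp_rw [← mul_div_assoc]
        rw [← Finset.sum_div]
      have hρW : ρ * W i = ρ * T V i / s := by
        show ρ * (T V i / s) = ρ * T V i / s; ring
      rw [hTW, hρW]
      exact (div_lt_div_iff_of_pos_right hs_pos).mpr key
    exact absurd (hVmax hWK) (not_le.mpr (hρdef ▸ hWr))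
  refine ⟨ρ, V, hρ_pos, hVpos, fun i => ?_⟩
  have h := heq i
  have h' : (∑ j, Real.exp (ζ * g i) * p i j * V j) = ρ * V i := h
  simp_rw [mul_assoc] at h'
  rw [← Finset.mul_sum] at h'
  rw [div_mul_eq_mul_div, h']
  field_simp
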